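/- arXiv:1404.7055 — 2 statements merged into one kernel-verified Lean document; each statement's English description precedes it below -/
import Mathlib

section
/- Let μ > 0, f > 0, and let 0 ≤ τ_AB and τ_AC = τ_AB + s with s ≥ f. Let Z ~ Exp(1) and define p(τ) = E[(3/4)(1 - e^{-(4/3)(μτ + 2μZ)})]. Then p(τ_AC) - p(τ_AB) ≥ (3 e^{-(4/3)μ τ_AC} μ f)/(8μ + 3). -/
open MeasureTheory Real Set
set_option maxHeartbeats 1000000

lemma integral_exp_neg_mul (b : ℝ) (hb : 0 < b) :
    (∫ x in Ioi (0:ℝ), Real.exp (-b * x)) = 1 / b := by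
  simp only [neg_mul]
  have := integral_comp_mul_left_Ioi (fun x => Real.exp (-x)) 0 hb
  simp only [mul_zero] at this
  rw [this, integral_exp_neg_Ioi_zero, smul_eq_mul, mul_one, one_div]

lemma pval (μ τ : ℝ) (hμ : 0 < μ) :
    (∫ z in Set.Ici (0 : ℝ),
        (3 / 4) * (1 - Real.exp (-(4 / 3) * (μ * τ + 2 * μ * z))) * Real.exp (-z))
      = 3 / 4 - (3 / 4) * Real.exp (-(4 / 3) * μ * τ) * (3 / (8 * μ + 3)) := by
  have hb : (0:ℝ) < 8 / 3 * μ + 1 := by positivity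
  rw [MeasureTheory.integral_Ici_eq_integral_Ioi]
  have heq : ∀ z : ℝ,
      (3 / 4) * (1 - Real.exp (-(4 / 3) * (μ * τ + 2 * μ * z))) * Real.exp (-z)
        = (3 / 4) * Real.exp (-z)
          - (3 / 4) * Real.exp (-(4 / 3) * μ * τ) * Real.exp (-(8 / 3 * μ + 1) * z) := by
    intro z
    have h : Real.exp (-(4 / 3) * (μ * τ + 2 * μ * z)) * Real.exp (-z)
        = Real.exp (-(4 / 3) * μ * τ) * Real.exp (-(8 / 3 * μ + 1) * z) := by
      rw [← Real.exp_add, ← Real.exp_add]; congr 1; ring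
    linear_combination (-(3/4) : ℝ) * h
  rw [MeasureTheory.setIntegral_congr_fun measurableSet_Ioi (fun z _ => heq z)]
  have h1 : IntegrableOn (fun z : ℝ => (3/4 : ℝ) * Real.exp (-z)) (Ioi 0) := by
    have := (exp_neg_integrableOn_Ioi 0 (by norm_num : (0:ℝ) < 1))
    have h := this.const_mul (3/4 : ℝ)
    simp at h
    exact h
  have h2 : IntegrableOn
      (fun z : ℝ => (3/4) * Real.exp (-(4 / 3) * μ * τ) * Real.exp (-(8/3 * μ + 1) * z))
      (Ioi 0) := by
    exact (exp_neg_integrableOn_Ioi 0 hb).const_mul _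
  rw [MeasureTheory.integral_sub h1 h2, MeasureTheory.integral_const_mul,
    MeasureTheory.integral_const_mul]
  have : (∫ z in Ioi (0:ℝ), Real.exp (-z)) = 1 := integral_exp_neg_Ioi_zero
  rw [this, integral_exp_neg_mul _ hb]
  have h3 : (8:ℝ) * μ + 3 ≠ 0 := by positivity
  have h4 : (8:ℝ) / 3 * μ + 1 ≠ 0 := ne_of_gt hb
  field_simp

/-- Key gap estimate (Theorem 1): with `Z ~ Exp(1)` and
`p(τ) = E[(3/4)(1 - e^{-(4/3)(μτ + 2μZ)})]`, if `τ_AC = τ_AB + s` with `s ≥ f > 0`, then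
`p(τ_AC) - p(τ_AB) ≥ 3 e^{-(4/3)μτ_AC} μ f / (8μ + 3)`. -/
theorem clock_gap_estimate (μ f τAB s : ℝ) (hμ : 0 < μ) (hf : 0 < f)
    (hτ : 0 ≤ τAB) (hs : f ≤ s) :
    (∫ z in Set.Ici (0 : ℝ),
        (3 / 4) * (1 - Real.exp (-(4 / 3) * (μ * (τAB + s) + 2 * μ * z))) * Real.exp (-z)) -
      (∫ z in Set.Ici (0 : ℝ),
        (3 / 4) * (1 - Real.exp (-(4 / 3) * (μ * τAB + 2 * μ * z))) * Real.exp (-z)) ≥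
      3 * Real.exp (-(4 / 3) * μ * (τAB + s)) * μ * f / (8 * μ + 3) := by
  rw [pval μ (τAB + s) hμ, pval μ τAB hμ]
  have hden : (0:ℝ) < 8 * μ + 3 := by positivity
  -- reduce to exp inequality
  have key : Real.exp (-(4 / 3) * μ * τAB) - Real.exp (-(4 / 3) * μ * (τAB + s))
      ≥ Real.exp (-(4 / 3) * μ * (τAB + s)) * (4 / 3 * μ * f) := by
    have h1 : Real.exp (-(4 / 3) * μ * τAB)
        = Real.exp (-(4 / 3) * μ * (τAB + s)) * Real.exp (4 / 3 * μ * s) := by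
      rw [← Real.exp_add]; ring_nf
    rw [h1]
    have h2 : Real.exp (4 / 3 * μ * s) - 1 ≥ 4 / 3 * μ * f := by
      have := Real.add_one_le_exp (4 / 3 * μ * s)
      nlinarith [mul_le_mul_of_nonneg_left hs (by positivity : (0:ℝ) ≤ 4/3*μ)]
    nlinarith [Real.exp_pos (-(4 / 3) * μ * (τAB + s))]
  have hE := Real.exp_pos (-(4 / 3) * μ * (τAB + s))
  have heq2 : (3 / 4 - 3 / 4 * Real.exp (-(4 / 3) * μ * (τAB + s)) * (3 / (8 * μ + 3))) -
      (3 / 4 - 3 / 4 * Real.exp (-(4 / 3) * μ * τAB) * (3 / (8 * μ + 3)))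
      = (9 / 4) * (Real.exp (-(4 / 3) * μ * τAB) - Real.exp (-(4 / 3) * μ * (τAB + s))) / (8 * μ + 3) := by
    field_simp
    ring
  rw [ge_iff_le, heq2]
  apply (div_le_div_iff_of_pos_right hden).mpr
  nlinarith [key, hE]
end

section
/- Let μ_{AB}, μ_{CD}, μ_{o1o3}, μ_{o2o3}, μ_{AC}, μ_{BD} be nonnegative reals with μ_{AB} + μ_{CD} + 2μ_{o1o3} + 2μ_{o2o3} = μ_{AC} + μ_{BD}. Let Z be a nonnegative random variable with E[e^{-(8/3)Z}] ≤ 1/((8/3)μ_L+1) for some μ_L > 0, and let q_1, q_2 ∈ [0,1]. Then (e^{-(4/3)(μ_{AB}+2μ_{o1o3})}(q_1 + E[e^{-(8/3)Z}](1-q_1)) · e^{-(4/3)(μ_{CD}+2μ_{o2o3})}(q_2 + E[e^{-(8/3)Z}](1-q_2))) / (e^{-(4/3)μ_{AC}} E[e^{-(8/3)Z}] · e^{-(4/3)μ_{BD}} E[e^{-(8/3)Z}]) ≥ ((8/3)μ_L q_1 + 1)((8/3)μ_L q_2 + 1). -/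
open MeasureTheory Real

/-- Algebraic core of Case (a) of Theorem 3 (four-point inequality for METAL).
With `I = E[e^{-(8/3)Z}] ≤ 1/((8/3)μ_L+1)`, `q₁, q₂ ∈ [0,1]`, and
`μ_AB + μ_CD + 2μ_{o1o3} + 2μ_{o2o3} = μ_AC + μ_BD`, the ratio of expected
transformed distances is at least `((8/3)μ_L q₁ + 1)((8/3)μ_L q₂ + 1)`. -/
theorem four_point_ratio_bound {Ω : Type*} [MeasurableSpace Ω]
    (ℙ : Measure Ω) [IsProbabilityMeasure ℙ]
    (Z : Ω → ℝ) (hZ : Measurable Z) (hZnn : ∀ ω, 0 ≤ Z ω)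
    (μAB μCD μ13 μ23 μAC μBD μL q1 q2 I : ℝ)
    (hAB : 0 ≤ μAB) (hCD : 0 ≤ μCD) (h13 : 0 ≤ μ13) (h23 : 0 ≤ μ23)
    (hAC : 0 ≤ μAC) (hBD : 0 ≤ μBD)
    (hsum : μAB + μCD + 2 * μ13 + 2 * μ23 = μAC + μBD)
    (hμL : 0 < μL)
    (hI : I = ∫ ω, Real.exp (-(8 / 3) * Z ω) ∂ℙ)
    (hIle : I ≤ 1 / ((8 / 3) * μL + 1))
    (hq1 : q1 ∈ Set.Icc (0 : ℝ) 1) (hq2 : q2 ∈ Set.Icc (0 : ℝ) 1) :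
    ((8 / 3) * μL * q1 + 1) * ((8 / 3) * μL * q2 + 1) ≤
      (Real.exp (-(4 / 3) * (μAB + 2 * μ13)) * (q1 + I * (1 - q1)) *
        (Real.exp (-(4 / 3) * (μCD + 2 * μ23)) * (q2 + I * (1 - q2)))) /
      (Real.exp (-(4 / 3) * μAC) * I * (Real.exp (-(4 / 3) * μBD) * I)) := by
  -- I is positive
  have hInt : Integrable (fun ω => Real.exp (-(8 / 3) * Z ω)) ℙ := by
    apply (integrable_const (1 : ℝ)).mono'
      ((Real.measurable_exp.comp ((measurable_const.mul hZ))).aestronglyMeasurable)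
    filter_upwards with ω
    simp only [Function.comp_apply, Real.norm_eq_abs, Real.abs_exp]
    exact Real.exp_le_one_iff.mpr (by show -(8 / 3) * Z ω ≤ 0; nlinarith [hZnn ω])
  have hIpos : 0 < I := by
    rw [hI]; exact integral_exp_pos hInt
  set c := (8 / 3 : ℝ) * μL with hc
  have hcpos : 0 < c := by positivity
  have hkey : (c + 1) * I ≤ 1 := by
    rw [div_eq_inv_mul, mul_one] at hIle
    calc (c + 1) * I ≤ (c + 1) * (c + 1)⁻¹ := by
          apply mul_le_mul_of_nonneg_left hIle (by linarith)
      _ = 1 := mul_inv_cancel₀ (by linarith)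
  have hfac : ∀ q : ℝ, q ∈ Set.Icc (0:ℝ) 1 → (c * q + 1) * I ≤ q + I * (1 - q) := by
    intro q hq
    obtain ⟨hq0, hq1⟩ := hq
    nlinarith [hkey]
  have h1 := hfac q1 hq1
  have h2 := hfac q2 hq2
  have hnn1 : 0 ≤ (c * q1 + 1) * I :=
    mul_nonneg (by nlinarith [mul_nonneg hcpos.le hq1.1]) hIpos.le
  have hprod : (c * q1 + 1) * (c * q2 + 1) * (I * I) ≤
      (q1 + I * (1 - q1)) * (q2 + I * (1 - q2)) := by
    nlinarith [h1, h2, hq1.1, hq2.1, hIpos, hcpos, mul_nonneg (mul_nonneg hcpos.le hq2.1) hIpos.le, mul_nonneg hq1.1 hq2.1]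
  -- exponentials
  have hexp : Real.exp (-(4 / 3) * (μAB + 2 * μ13)) * Real.exp (-(4 / 3) * (μCD + 2 * μ23))
      = Real.exp (-(4 / 3) * μAC) * Real.exp (-(4 / 3) * μBD) := by
    rw [← Real.exp_add, ← Real.exp_add]; congr 1; linarith
  have hE : (0:ℝ) < Real.exp (-(4 / 3) * μAC) * Real.exp (-(4 / 3) * μBD) := by positivity
  rw [le_div_iff₀ (by positivity)]
  calc ((8/3) * μL * q1 + 1) * ((8/3) * μL * q2 + 1) *
        (Real.exp (-(4 / 3) * μAC) * I * (Real.exp (-(4 / 3) * μBD) * I))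
      = (c * q1 + 1) * (c * q2 + 1) * (I * I) *
        (Real.exp (-(4 / 3) * μAC) * Real.exp (-(4 / 3) * μBD)) := by ring
    _ ≤ (q1 + I * (1 - q1)) * (q2 + I * (1 - q2)) *
        (Real.exp (-(4 / 3) * μAC) * Real.exp (-(4 / 3) * μBD)) :=
        mul_le_mul_of_nonneg_right hprod hE.le
    _ = Real.exp (-(4 / 3) * (μAB + 2 * μ13)) * (q1 + I * (1 - q1)) *
        (Real.exp (-(4 / 3) * (μCD + 2 * μ23)) * (q2 + I * (1 - q2))) := by
        rw [← hexp]; ring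
end
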